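/- arXiv:2601.09837 — 3 statements merged into one kernel-verified Lean document; each statement's English description precedes it below -/
import Mathlib

section
/- Let U, V, Z be finite sets, let P_{UV} and Q_{UV} be probability mass functions on U × V such that P_{UV}(u,v) = 0 whenever Q_{UV}(u,v) = 0, with marginals P_U, P_V, Q_V, and let Γ₀, Γ₁ be probability mass functions on Z. Define K := sup over probability mass functions π_z on Z of [ D(π_z ‖ Γ₀) − (3/2)·D(π_z ‖ Γ₁) ], define the set 𝒫̄_U := { π_U pmf on U : D(π_U ‖ P_U) ≥ K }, define T_U(u) := Σ_v P_V(v) Q_{U|V}(u|v) where Q_{U|V}(u|v) = Q_{UV}(u,v)/Q_V(v). If T_U ∈ 𝒫̄_U, then every probability mass function π_{UV} on U × V with V-marginal equal to P_V and U-marginal not in 𝒫̄_U satisfies D(π_{UV} ‖ Q_{UV}) > D(P_V ‖ Q_V). -/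
/-!
STATEMENT 10: With `K := sup_{π_z pmf on Z} [D(π_z‖Γ₀) - (3/2)·D(π_z‖Γ₁)]` (extended-real
valued, terms with `D(π_z‖Γ₁) = +∞` interpreted as `-∞`),
`𝒫̄_U := {π_U pmf : D(π_U‖P_U) ≥ K}`, and `T_U(u) := Σ_v P_V(v) Q_{U|V}(u|v)`:
if `T_U ∈ 𝒫̄_U`, then every pmf `π_{UV}` on `U × V` with `V`-marginal `P_V` and `U`-marginal
not in `𝒫̄_U` satisfies `D(π_{UV}‖Q_{UV}) > D(P_V‖Q_V)`.
-/

open scoped BigOperators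

/-- `P` is a probability mass function on the finite set `Z`. -/
def IsPmf {Z : Type*} [Fintype Z] (P : Z → ℝ) : Prop :=
  (∀ z, 0 ≤ P z) ∧ ∑ z, P z = 1

/-- Kullback–Leibler divergence (natural log, terms with `P z = 0` contribute `0`);
only meaningful when `P` is absolutely continuous w.r.t. `Q`. -/
noncomputable def klDiv {Z : Type*} [Fintype Z] (P Q : Z → ℝ) : ℝ :=
  ∑ z, if 0 < P z then P z * Real.log (P z / Q z) else 0

/-- Extended-real Kullback–Leibler divergence: equals `+∞` if `P` is not absolutely
continuous with respect to `Q`. -/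
noncomputable def klDivE {Z : Type*} [Fintype Z] (P Q : Z → ℝ) : EReal :=
  if ∀ z, Q z = 0 → P z = 0 then ((klDiv P Q : ℝ) : EReal) else ⊤

/-- `K := sup` over pmfs `π` on `Z` of `D(π‖Γ₀) - (3/2)·D(π‖Γ₁)`, in the extended reals
(in `EReal`, terms with `D(π‖Γ₁) = +∞` equal `-∞`, as in the convention). -/
noncomputable def Ksup {Z : Type*} [Fintype Z] (Γ0 Γ1 : Z → ℝ) : EReal :=
  ⨆ π : {p : Z → ℝ // IsPmf p},
    klDivE (π : Z → ℝ) Γ0 - ((3 / 2 : ℝ) : EReal) * klDivE (π : Z → ℝ) Γ1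

/-- Single term of the KL divergence. -/
noncomputable def klTerm (x y : ℝ) : ℝ := if 0 < x then x * Real.log (x / y) else 0

lemma klDiv_eq {Z : Type*} [Fintype Z] (P Q : Z → ℝ) :
    klDiv P Q = ∑ z, klTerm (P z) (Q z) := rfl

/-- Pointwise tangent-line bound underlying the log-sum inequality. -/
lemma klTerm_pt {a b A B : ℝ} (ha : 0 ≤ a) (hb : 0 ≤ b) (hab : b = 0 → a = 0)
    (hA : 0 < A) (hB : 0 < B) :
    (a - A / B * b) + a * Real.log (A / B) ≤ klTerm a b ∧
      (a ≠ A / B * b → (a - A / B * b) + a * Real.log (A / B) < klTerm a b) := by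
  have hABpos : 0 < A / B := div_pos hA hB
  rcases eq_or_lt_of_le ha with h0 | hpos
  · have hk : klTerm a b = 0 := by simp [klTerm, ← h0]
    have hcn : 0 ≤ A / B * b := mul_nonneg hABpos.le hb
    constructor
    · rw [hk, ← h0]; simp; linarith
    · intro hne
      rw [hk, ← h0]
      have : 0 < A / B * b := lt_of_le_of_ne hcn (by rw [← h0] at hne; exact hne)
      simp; linarith
  · have hbpos : 0 < b := by
      rcases eq_or_lt_of_le hb with h | h
      · exact absurd (hab h.symm) hpos.ne'
      · exact h
    set c := A / B * b with hc
    have hcpos : 0 < c := mul_pos hABpos hbpos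
    have hk : klTerm a b = a * Real.log (a / c) + a * Real.log (A / B) := by
      rw [klTerm, if_pos hpos, ← mul_add, ← Real.log_mul (by positivity) (by positivity)]
      congr 2
      rw [hc]
      field_simp
    have hlog : Real.log (c / a) = -Real.log (a / c) := by
      rw [← Real.log_inv, inv_div]
    have key : a - c ≤ a * Real.log (a / c) := by
      have h1 : Real.log (c / a) ≤ c / a - 1 := Real.log_le_sub_one_of_pos (by positivity)
      rw [hlog] at h1
      have h2 : 1 - c / a ≤ Real.log (a / c) := by linarith
      have h3 : a * (1 - c / a) ≤ a * Real.log (a / c) :=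
        mul_le_mul_of_nonneg_left h2 hpos.le
      have h4 : a * (1 - c / a) = a - c := by field_simp
      linarith
    constructor
    · rw [hk]; linarith
    · intro hne
      have hstrict : a - c < a * Real.log (a / c) := by
        have hne1 : c / a ≠ 1 := by
          intro h
          field_simp at h
          exact hne h.symm
        have h1 : Real.log (c / a) < c / a - 1 :=
          Real.log_lt_sub_one_of_pos (by positivity) hne1
        rw [hlog] at h1
        have h2 : 1 - c / a < Real.log (a / c) := by linarith
        have h3 : a * (1 - c / a) < a * Real.log (a / c) :=
          mul_lt_mul_of_pos_left h2 hpos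
        have h4 : a * (1 - c / a) = a - c := by field_simp
        linarith
      rw [hk]; linarith

/-- Log-sum inequality with equality characterization. -/
lemma klTerm_logsum {U : Type*} [Fintype U] (a b : U → ℝ) (ha : ∀ u, 0 ≤ a u)
    (hb : ∀ u, 0 ≤ b u) (hab : ∀ u, b u = 0 → a u = 0) :
    klTerm (∑ u, a u) (∑ u, b u) ≤ ∑ u, klTerm (a u) (b u) ∧
      ((∀ u, a u = (∑ u, a u) / (∑ u, b u) * b u) ∨
        klTerm (∑ u, a u) (∑ u, b u) < ∑ u, klTerm (a u) (b u)) := by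
  set A := ∑ u, a u with hAdef
  set B := ∑ u, b u with hBdef
  have hA0 : 0 ≤ A := Finset.sum_nonneg fun u _ => ha u
  have hB0 : 0 ≤ B := Finset.sum_nonneg fun u _ => hb u
  rcases eq_or_lt_of_le hB0 with hB | hB
  · have hb0 : ∀ u, b u = 0 := by
      intro u
      have := (Finset.sum_eq_zero_iff_of_nonneg (fun u _ => hb u)).mp hB.symm
      exact this u (Finset.mem_univ u)
    have ha0 : ∀ u, a u = 0 := fun u => hab u (hb0 u)
    have hA' : A = 0 := Finset.sum_eq_zero fun u _ => ha0 u
    have h1 : klTerm A B = 0 := by rw [hA', klTerm]; simp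
    have h2 : ∑ u, klTerm (a u) (b u) = 0 :=
      Finset.sum_eq_zero fun u _ => by rw [ha0 u, klTerm]; simp
    constructor
    · rw [h1, h2]
    · exact Or.inl fun u => by rw [ha0 u, hb0 u, mul_zero]
  · rcases eq_or_lt_of_le hA0 with hA | hA
    · have ha0 : ∀ u, a u = 0 := by
        intro u
        have := (Finset.sum_eq_zero_iff_of_nonneg (fun u _ => ha u)).mp hA.symm
        exact this u (Finset.mem_univ u)
      have h1 : klTerm A B = 0 := by rw [← hA, klTerm]; simp
      have h2 : ∑ u, klTerm (a u) (b u) = 0 :=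
        Finset.sum_eq_zero fun u _ => by rw [ha0 u, klTerm]; simp
      constructor
      · rw [h1, h2]
      · exact Or.inl fun u => by rw [ha0 u, ← hA, zero_div, zero_mul]
    · have hpt := fun u => klTerm_pt (ha u) (hb u) (hab u) hA hB
      have hsumL : ∑ u, ((a u - A / B * b u) + a u * Real.log (A / B)) = klTerm A B := by
        rw [klTerm, if_pos hA]
        rw [Finset.sum_add_distrib, Finset.sum_sub_distrib, ← Finset.mul_sum,
          ← Finset.sum_mul, ← hAdef, ← hBdef]
        field_simp
        ring
      have hle : klTerm A B ≤ ∑ u, klTerm (a u) (b u) := by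
        rw [← hsumL]
        exact Finset.sum_le_sum fun u _ => (hpt u).1
      refine ⟨hle, ?_⟩
      by_cases hall : ∀ u, a u = A / B * b u
      · exact Or.inl hall
      · push_neg at hall
        obtain ⟨u₀, hu₀⟩ := hall
        refine Or.inr ?_
        rw [← hsumL]
        exact Finset.sum_lt_sum (fun u _ => (hpt u).1)
          ⟨u₀, Finset.mem_univ _, (hpt u₀).2 hu₀⟩

theorem klDiv_gt_of_TU_mem_Pbar {U V Z : Type*}
    [Fintype U] [Fintype V] [Fintype Z]
    (P Q : U × V → ℝ) (hP : IsPmf P) (hQ : IsPmf Q)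
    (habs : ∀ p, Q p = 0 → P p = 0)
    (Γ0 Γ1 : Z → ℝ) (hΓ0 : IsPmf Γ0) (hΓ1 : IsPmf Γ1)
    (hTU : Ksup Γ0 Γ1 ≤
        klDivE (fun u => ∑ v, (∑ u', P (u', v)) * (Q (u, v) / ∑ u', Q (u', v)))
          (fun u => ∑ v, P (u, v))) :
    ∀ π : U × V → ℝ, IsPmf π →
      (∀ v, ∑ u, π (u, v) = ∑ u, P (u, v)) →
      ¬ Ksup Γ0 Γ1 ≤ klDivE (fun u => ∑ v, π (u, v)) (fun u => ∑ v, P (u, v)) →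
      klDivE (fun v => ∑ u, P (u, v)) (fun v => ∑ u, Q (u, v)) < klDivE π Q := by
  intro π hπ hmarg hπU
  have h_ne : (fun u => ∑ v, π (u, v)) ≠
      (fun u => ∑ v, (∑ u', P (u', v)) * (Q (u, v) / ∑ u', Q (u', v))) := by
    intro h
    rw [h] at hπU
    exact hπU hTU
  have habsV : ∀ v, (∑ u, Q (u, v)) = 0 → (∑ u, P (u, v)) = 0 := by
    intro v hv
    have hq0 := (Finset.sum_eq_zero_iff_of_nonneg (fun u _ => hQ.1 (u, v))).mp hv
    exact Finset.sum_eq_zero fun u _ => habs _ (hq0 u (Finset.mem_univ u))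
  by_cases habsπ : ∀ p : U × V, Q p = 0 → π p = 0
  · rw [klDivE, if_pos habsV, klDivE, if_pos habsπ, EReal.coe_lt_coe_iff]
    -- a strict log-sum argument
    have key : ∀ v,
        klTerm (∑ u, π (u, v)) (∑ u, Q (u, v)) ≤ ∑ u, klTerm (π (u, v)) (Q (u, v)) ∧
          ((∀ u, π (u, v) = (∑ u', π (u', v)) / (∑ u', Q (u', v)) * Q (u, v)) ∨
            klTerm (∑ u, π (u, v)) (∑ u, Q (u, v)) < ∑ u, klTerm (π (u, v)) (Q (u, v))) :=
      fun v => klTerm_logsum (fun u => π (u, v)) (fun u => Q (u, v))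
        (fun u => hπ.1 (u, v)) (fun u => hQ.1 (u, v)) (fun u h => habsπ (u, v) h)
    have hex : ∃ v, ¬ ∀ u, π (u, v) = (∑ u', π (u', v)) / (∑ u', Q (u', v)) * Q (u, v) := by
      by_contra h
      push_neg at h
      apply h_ne
      funext u
      calc ∑ v, π (u, v)
          = ∑ v, (∑ u', π (u', v)) / (∑ u', Q (u', v)) * Q (u, v) :=
            Finset.sum_congr rfl fun v _ => h v u
        _ = ∑ v, (∑ u', P (u', v)) * (Q (u, v) / ∑ u', Q (u', v)) :=
            Finset.sum_congr rfl fun v _ => by rw [hmarg v]; ring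
    obtain ⟨v₀, hv₀⟩ := hex
    have hstrict := ((key v₀).2).resolve_left hv₀
    calc klDiv (fun v => ∑ u, P (u, v)) (fun v => ∑ u, Q (u, v))
        = ∑ v, klTerm (∑ u, π (u, v)) (∑ u, Q (u, v)) := by
          rw [klDiv_eq]
          exact Finset.sum_congr rfl fun v _ => by rw [hmarg v]
      _ < ∑ v, ∑ u, klTerm (π (u, v)) (Q (u, v)) :=
          Finset.sum_lt_sum (fun v _ => (key v).1) ⟨v₀, Finset.mem_univ _, hstrict⟩
      _ = klDiv π Q := by
          rw [klDiv_eq, Fintype.sum_prod_type, Finset.sum_comm]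
  · rw [klDivE, if_pos habsV, klDivE, if_neg habsπ]
    exact EReal.coe_lt_top _
end

section
/- Let α be a finite set, let Q be a probability mass function on α, let n ≥ 1, let X₁, …, Xₙ be i.i.d. with law Q, and let Π be any set of empirical types with denominator n on α. Then Pr[ the empirical type of (X₁,…,Xₙ) belongs to Π ] ≤ (n+1)^{|α|} · exp( −n · inf_{π ∈ Π} D(π ‖ Q) ). -/
/-!
STATEMENT 14: Sanov-type upper bound. For i.i.d. `X₁,…,Xₙ ∼ Q` on a finite set `α`
(modelled by the product pmf on `Fin n → α`) and any set `S` of empirical types with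
denominator `n`, `Pr[empirical type of (X₁,…,Xₙ) ∈ S] ≤ (n+1)^{|α|} · exp(-n·inf_{π ∈ S} D(π‖Q))`,
where `exp(-n·inf ...)` is expressed as the supremum of `exp(-n·D(π‖Q))` over `π ∈ S`, with
`exp(-n·D(π‖Q)) := 0` when `D(π‖Q) = +∞` (i.e. `π` not absolutely continuous w.r.t. `Q`),
and the supremum of the empty set being `0` (Lean's `sSup ∅ = 0` for reals).
-/

open scoped BigOperators Classical

/-- The `n`-fold product pmf on `Fin n → Z`. -/
noncomputable def prodPmf {Z : Type*} [Fintype Z] (P : Z → ℝ) (n : ℕ) : (Fin n → Z) → ℝ :=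
  fun x => ∏ i, P (x i)

/-- `π` is an empirical type with denominator `n` on `Z`: a pmf all of whose values are
integer multiples of `1/n`. -/
def IsType {Z : Type*} [Fintype Z] (n : ℕ) (π : Z → ℝ) : Prop :=
  IsPmf π ∧ ∀ a, ∃ k : ℕ, π a = (k : ℝ) / n

/-- The empirical type of the sequence `x ∈ αⁿ`. -/
noncomputable def empType {α : Type*} [Fintype α] {n : ℕ} (x : Fin n → α) : α → ℝ :=
  fun a => ((Finset.univ.filter fun i => x i = a).card : ℝ) / n

/-- `exp(-n·D(P‖Q))`, with value `0` when `D(P‖Q) = +∞` (no absolute continuity),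
matching the convention `exp(-∞) = 0`. -/
noncomputable def expNegKL {Z : Type*} [Fintype Z] (n : ℕ) (P Q : Z → ℝ) : ℝ :=
  if ∀ z, Q z = 0 → P z = 0 then Real.exp (-(n : ℝ) * klDiv P Q) else 0

/-- Regroup a product over a sequence by letters. -/
lemma prod_regroup {α : Type*} [Fintype α] {n : ℕ} (f : α → ℝ) (x : Fin n → α) :
    ∏ i, f (x i) = ∏ a, f a ^ (Finset.univ.filter fun i => x i = a).card := by
  rw [← Finset.prod_fiberwise_of_maps_to (g := x) (t := Finset.univ)
    (fun i _ => Finset.mem_univ _) (fun i => f (x i))]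
  refine Finset.prod_congr rfl fun a _ => ?_
  rw [← Finset.prod_const]
  exact Finset.prod_congr rfl fun i hi => by rw [(Finset.mem_filter.1 hi).2]

lemma klDiv_nonneg' {α : Type*} [Fintype α] {P Q : α → ℝ}
    (hP : IsPmf P) (hQ : IsPmf Q)
    (hac : ∀ z, Q z = 0 → P z = 0) : 0 ≤ klDiv P Q := by
  obtain ⟨hP0, hP1⟩ := hP
  obtain ⟨hQ0, hQ1⟩ := hQ
  have key : ∀ z, (if 0 < P z then P z - Q z else 0) ≤
      (if 0 < P z then P z * Real.log (P z / Q z) else 0) := by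
    intro z
    by_cases h : 0 < P z
    · simp only [h, if_true]
      have hQz : 0 < Q z := lt_of_le_of_ne (hQ0 z) fun e => absurd (hac z e.symm) (ne_of_gt h)
      have hlog : Real.log (Q z / P z) ≤ Q z / P z - 1 :=
        Real.log_le_sub_one_of_pos (div_pos hQz h)
      have hneg : Real.log (P z / Q z) = - Real.log (Q z / P z) := by
        rw [← Real.log_inv]; congr 1; field_simp
      rw [hneg]
      have h5 := mul_le_mul_of_nonneg_left hlog (le_of_lt h)
      have h6 : P z * (Q z / P z - 1) = Q z - P z := by field_simp
      linarith
    · simp [h]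
  have h1 : (∑ z, if 0 < P z then P z - Q z else 0) ≤ klDiv P Q :=
    Finset.sum_le_sum fun z _ => key z
  have h2 : (∑ z, if 0 < P z then P z - Q z else 0)
      = (∑ z, if 0 < P z then P z else 0) - (∑ z, if 0 < P z then Q z else 0) := by
    rw [← Finset.sum_sub_distrib]
    exact Finset.sum_congr rfl fun z _ => by by_cases h : 0 < P z <;> simp [h]
  have h3 : (∑ z, if 0 < P z then P z else 0) = 1 := by
    rw [← hP1]
    refine Finset.sum_congr rfl fun z _ => ?_
    by_cases h : 0 < P z
    · simp [h]
    · simp [h, le_antisymm (not_lt.1 h) (hP0 z)]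
  have h4 : (∑ z, if 0 < P z then Q z else 0) ≤ 1 := by
    rw [← hQ1]
    exact Finset.sum_le_sum fun z _ => by by_cases h : 0 < P z <;> simp [h, hQ0 z]
  linarith

/-- The probability of a fixed type class is at most `expNegKL`. -/
lemma sum_fiber_le {α : Type*} [Fintype α] (Q : α → ℝ) (hQ : IsPmf Q) {n : ℕ} (hn : 1 ≤ n)
    (π : α → ℝ) (hπ : IsType n π) :
    ∑ x ∈ Finset.univ.filter (fun x : Fin n → α => empType x = π), prodPmf Q n x ≤
      expNegKL n π Q := by
  have hn0 : (n : ℝ) ≠ 0 := Nat.cast_ne_zero.2 (by omega)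
  by_cases hac : ∀ z, Q z = 0 → π z = 0
  · -- absolutely continuous case
    have key : ∀ x : Fin n → α, empType x = π →
        prodPmf Q n x = Real.exp (-(n : ℝ) * klDiv π Q) * prodPmf π n x := by
      intro x hx
      set c : α → ℕ := fun a => (Finset.univ.filter fun i => x i = a).card with hc
      have hcn : ∀ a, (c a : ℝ) = n * π a := by
        intro a
        have : π a = (c a : ℝ) / n := by rw [← hx]; rfl
        rw [this]; field_simp
      have hexp : Real.exp (-(n : ℝ) * klDiv π Q)
          = ∏ a, Real.exp (-(n : ℝ) * (if 0 < π a then π a * Real.log (π a / Q a) else 0)) := by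
        rw [← Real.exp_sum, klDiv, Finset.mul_sum]
      rw [prodPmf, prodPmf, prod_regroup Q x, prod_regroup π x, hexp, ← Finset.prod_mul_distrib]
      refine Finset.prod_congr rfl fun a _ => ?_
      by_cases hπa : 0 < π a
      · have hQa : 0 < Q a := lt_of_le_of_ne (hQ.1 a) fun e => absurd (hac a e.symm) (ne_of_gt hπa)
        simp only [hπa, if_true]
        have hl : -(n : ℝ) * (π a * Real.log (π a / Q a)) = (c a : ℝ) * Real.log (Q a / π a) := by
          have : Real.log (Q a / π a) = - Real.log (π a / Q a) := by
            rw [← Real.log_inv]; congr 1; field_simp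
          rw [this, hcn a]; ring
        rw [hl, Real.exp_nat_mul, Real.exp_log (div_pos hQa hπa), div_pow,
          div_mul_cancel₀ _ (pow_ne_zero _ (ne_of_gt hπa))]
      · have hπ0 : π a = 0 := le_antisymm (not_lt.1 hπa) (hπ.1.1 a)
        have hca : (Finset.univ.filter fun i => x i = a).card = 0 := by
          have := hcn a
          rw [hπ0, mul_zero, Nat.cast_eq_zero] at this
          exact this
        simp [hπa, hca]
    have hsum1 : ∑ x : Fin n → α, prodPmf π n x = 1 := by
      have := Fintype.sum_pow π n
      simp only [prodPmf]
      rw [← this, hπ.1.2, one_pow]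
    calc ∑ x ∈ Finset.univ.filter (fun x : Fin n → α => empType x = π), prodPmf Q n x
        = ∑ x ∈ Finset.univ.filter (fun x : Fin n → α => empType x = π),
            Real.exp (-(n : ℝ) * klDiv π Q) * prodPmf π n x :=
          Finset.sum_congr rfl fun x hx => key x (Finset.mem_filter.1 hx).2
      _ = Real.exp (-(n : ℝ) * klDiv π Q) *
            ∑ x ∈ Finset.univ.filter (fun x : Fin n → α => empType x = π), prodPmf π n x := by
          rw [Finset.mul_sum]
      _ ≤ Real.exp (-(n : ℝ) * klDiv π Q) * 1 := by
          refine mul_le_mul_of_nonneg_left ?_ (Real.exp_nonneg _)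
          rw [← hsum1]
          refine Finset.sum_le_sum_of_subset_of_nonneg (Finset.filter_subset _ _)
            fun x _ _ => Finset.prod_nonneg fun i _ => hπ.1.1 _
      _ = expNegKL n π Q := by rw [mul_one, expNegKL, if_pos hac]
  · -- non absolutely continuous case: probability is 0
    push_neg at hac
    obtain ⟨z, hQz, hπz⟩ := hac
    have hπzpos : 0 < π z := lt_of_le_of_ne (hπ.1.1 z) (Ne.symm hπz)
    have hzero : ∀ x ∈ Finset.univ.filter (fun x : Fin n → α => empType x = π),
        prodPmf Q n x = 0 := by
      intro x hx
      have hx' := (Finset.mem_filter.1 hx).2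
      have hcz : (Finset.univ.filter fun i => x i = z).card ≠ 0 := by
        intro h0
        have : empType x z = 0 := by simp [empType, h0]
        rw [hx'] at this
        exact absurd this (ne_of_gt hπzpos)
      rw [prodPmf, prod_regroup Q x]
      exact Finset.prod_eq_zero (Finset.mem_univ z) (by rw [hQz, zero_pow hcz])
    rw [Finset.sum_eq_zero hzero, expNegKL, if_neg]
    push_neg
    exact ⟨z, hQz, hπz⟩

lemma expNegKL_nonneg {α : Type*} [Fintype α] (n : ℕ) (P Q : α → ℝ) : 0 ≤ expNegKL n P Q := by
  rw [expNegKL]; split <;> [exact Real.exp_nonneg _; rfl]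

lemma expNegKL_le_one {α : Type*} [Fintype α] {n : ℕ} {P Q : α → ℝ}
    (hP : IsPmf P) (hQ : IsPmf Q) : expNegKL n P Q ≤ 1 := by
  rw [expNegKL]
  split
  · next hac =>
    rw [← Real.exp_zero]
    apply Real.exp_le_exp.2
    have := klDiv_nonneg' hP hQ hac
    have : 0 ≤ (n : ℝ) * klDiv P Q := mul_nonneg (Nat.cast_nonneg n) this
    linarith
  · norm_num

theorem prob_empType_mem_le {α : Type*} [Fintype α]
    (Q : α → ℝ) (hQ : IsPmf Q) (n : ℕ) (hn : 1 ≤ n)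
    (S : Set (α → ℝ)) (hS : ∀ π ∈ S, IsType n π) :
    ∑ x ∈ Finset.univ.filter (fun x : Fin n → α => empType x ∈ S), prodPmf Q n x ≤
      ((n : ℝ) + 1) ^ (Fintype.card α) * sSup {r : ℝ | ∃ π ∈ S, r = expNegKL n π Q} := by
  classical
  set R : Set ℝ := {r : ℝ | ∃ π ∈ S, r = expNegKL n π Q} with hR
  have hbdd : BddAbove R := by
    refine ⟨1, fun r hr => ?_⟩
    obtain ⟨π, hπS, rfl⟩ := hr
    exact expNegKL_le_one (hS π hπS).1 hQ
  have hsSup0 : 0 ≤ sSup R :=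
    Real.sSup_nonneg fun r hr => by
      obtain ⟨π, _, rfl⟩ := hr; exact expNegKL_nonneg n π Q
  set A : Finset (Fin n → α) := Finset.univ.filter (fun x => empType x ∈ S) with hA
  set T : Finset (α → ℝ) :=
    ((Finset.univ : Finset (Fin n → α)).image empType).filter (· ∈ S) with hT
  have hmaps : ∀ x ∈ A, empType x ∈ T := by
    intro x hx
    rw [hT, Finset.mem_filter]
    exact ⟨Finset.mem_image_of_mem _ (Finset.mem_univ x), (Finset.mem_filter.1 hx).2⟩
  have hfib := Finset.sum_fiberwise_of_maps_to hmaps (prodPmf Q n)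
  -- card bound on T
  have hcardT : (T.card : ℝ) ≤ ((n : ℝ) + 1) ^ (Fintype.card α) := by
    have h1 : T.card ≤ (n + 1) ^ (Fintype.card α) := by
      have hg : ∀ x : Fin n → α, ∀ a : α, (Finset.univ.filter fun i => x i = a).card < n + 1 := by
        intro x a
        have := Finset.card_filter_le (Finset.univ : Finset (Fin n)) (fun i => x i = a)
        simpa using Nat.lt_succ_of_le this
      set g : (Fin n → α) → (α → Fin (n + 1)) := fun x a => ⟨_, hg x a⟩ with hgdef
      set h : (α → Fin (n + 1)) → (α → ℝ) := fun c a => ((c a : ℕ) : ℝ) / n with hhdef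
      have hcomp : (empType : (Fin n → α) → α → ℝ) = h ∘ g := rfl
      calc T.card ≤ ((Finset.univ : Finset (Fin n → α)).image empType).card :=
            Finset.card_le_card (Finset.filter_subset _ _)
        _ = (((Finset.univ : Finset (Fin n → α)).image g).image h).card := by
            rw [hcomp, Finset.image_image]
        _ ≤ ((Finset.univ : Finset (Fin n → α)).image g).card := Finset.card_image_le
        _ ≤ (Finset.univ : Finset (α → Fin (n + 1))).card :=
            Finset.card_le_card (Finset.subset_univ _)
        _ = (n + 1) ^ (Fintype.card α) := by
            rw [Finset.card_univ, Fintype.card_fun, Fintype.card_fin]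
    calc (T.card : ℝ) ≤ ((n + 1 : ℕ) ^ (Fintype.card α) : ℕ) := by exact_mod_cast h1
      _ = ((n : ℝ) + 1) ^ (Fintype.card α) := by push_cast; ring
  calc ∑ x ∈ A, prodPmf Q n x
      = ∑ π ∈ T, ∑ x ∈ A.filter (fun x => empType x = π), prodPmf Q n x := hfib.symm
    _ ≤ ∑ π ∈ T, sSup R := by
        refine Finset.sum_le_sum fun π hπT => ?_
        have hπS : π ∈ S := (Finset.mem_filter.1 hπT).2
        have hle : ∑ x ∈ A.filter (fun x => empType x = π), prodPmf Q n x ≤ expNegKL n π Q := by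
          refine le_trans ?_ (sum_fiber_le Q hQ hn π (hS π hπS))
          refine Finset.sum_le_sum_of_subset_of_nonneg ?_
            fun x _ _ => Finset.prod_nonneg fun i _ => hQ.1 _
          intro x hx
          rw [Finset.mem_filter] at hx ⊢
          exact ⟨Finset.mem_univ x, hx.2⟩
        exact le_trans hle (le_csSup hbdd ⟨π, hπS, rfl⟩)
    _ = (T.card : ℝ) * sSup R := by rw [Finset.sum_const, nsmul_eq_mul]
    _ ≤ ((n : ℝ) + 1) ^ (Fintype.card α) * sSup R := by
        exact mul_le_mul_of_nonneg_right hcardT hsSup0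
end

section
/- Let α be a finite set, let P be a probability mass function on α, let n ≥ 1, let π be an empirical type with denominator n on α whose support is contained in the support of P, and let T(π) := { xⁿ ∈ αⁿ : the empirical type of xⁿ equals π } be its type class. Then for every subset A ⊆ T(π) and every c ∈ [0,1] with |A| ≥ c·|T(π)|, one has P^{⊗n}(A) ≥ c · (n+1)^{−|α|} · exp( −n·D(π ‖ P) ). -/
/-!
STATEMENT 17: For a pmf `P` on a finite set `α`, `n ≥ 1`, an empirical type `π` with
denominator `n` whose support is contained in the support of `P`, with type class
`T(π) := {xⁿ : empirical type of xⁿ = π}`: for every `A ⊆ T(π)` and `c ∈ [0,1]` with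
`|A| ≥ c·|T(π)|`, one has `P^{⊗n}(A) ≥ c · (n+1)^{-|α|} · exp(-n·D(π‖P))`.
-/

open scoped BigOperators Classical

open Finset Nat


/-- number of occurrences of `a` in `x` -/
noncomputable def cnt {α : Type*} [Fintype α] {n : ℕ} (x : Fin n → α) (a : α) : ℕ :=
  (Finset.univ.filter fun i => x i = a).card

lemma aux1 (m : ℕ) : ∀ d j, j + d = m → m ! ≤ j ! * m ^ d := by
  intro d
  induction d with
  | zero => intro j h; simp [← h]
  | succ d ih =>
    intro j h
    have h1 : (j + 1) + d = m := by omega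
    have h2 : j + 1 ≤ m := by omega
    calc m ! ≤ (j+1)! * m ^ d := ih (j+1) h1
      _ = (j+1) * (j ! * m ^ d) := by rw [Nat.factorial_succ]; ring
      _ ≤ m * (j ! * m ^ d) := Nat.mul_le_mul_right _ h2
      _ = j ! * m ^ (d+1) := by ring

lemma aux2 (m : ℕ) : ∀ d j, m + d = j → m ^ d * m ! ≤ j ! := by
  intro d
  induction d with
  | zero => intro j h; simp [← h]
  | succ d ih =>
    intro j h
    subst h
    calc m ^ (d+1) * m ! = m * (m ^ d * m !) := by ring
      _ ≤ m * (m + d)! := Nat.mul_le_mul_left _ (ih (m + d) rfl)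
      _ ≤ (m + d + 1) * (m + d)! := Nat.mul_le_mul_right _ (by omega)
      _ = (m + (d + 1))! := by rw [show m + (d+1) = (m+d)+1 by omega, Nat.factorial_succ]

lemma fact_mul_pow_le (m j : ℕ) : m ! * m ^ j ≤ j ! * m ^ m := by
  rcases le_or_gt j m with h | h
  · have e : m - j + j = m := Nat.sub_add_cancel h
    calc m ! * m ^ j ≤ (j ! * m ^ (m - j)) * m ^ j :=
        Nat.mul_le_mul_right _ (aux1 m (m - j) j (by omega))
      _ = j ! * m ^ (m - j + j) := by rw [pow_add]; ring
      _ = j ! * m ^ m := by rw [e]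
  · have e : m + (j - m) = j := by omega
    calc m ! * m ^ j = m ! * m ^ (m + (j - m)) := by rw [e]
      _ = (m ^ (j - m) * m !) * m ^ m := by rw [pow_add]; ring
      _ ≤ j ! * m ^ m := Nat.mul_le_mul_right _ (aux2 m (j - m) j e)

lemma cnt_sum {α : Type*} [Fintype α] {n : ℕ} (x : Fin n → α) : ∑ a, cnt x a = n := by
  classical
  have := Finset.card_eq_sum_card_fiberwise
    (f := x) (s := (univ : Finset (Fin n))) (t := univ) (fun i _ => mem_univ _)
  simpa [cnt] using this.symm

lemma prod_comp_cnt {α : Type*} [Fintype α] {n : ℕ} (x : Fin n → α) (f : α → ℝ) :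
    ∏ i, f (x i) = ∏ a, f a ^ cnt x a := by
  classical
  rw [← Finset.prod_fiberwise_of_maps_to (g := x) (t := univ) (fun i _ => mem_univ _) (fun i => f (x i))]
  refine Finset.prod_congr rfl fun a _ => ?_
  calc ∏ i ∈ filter (fun i => x i = a) univ, f (x i)
      = ∏ _i ∈ filter (fun i => x i = a) univ, f a :=
        Finset.prod_congr rfl (fun i hi => by simp only [mem_filter] at hi; rw [hi.2])
    _ = f a ^ cnt x a := by rw [Finset.prod_const, cnt]

lemma card_sigma_fiber {α : Type*} [Fintype α] (k : α → ℕ) (a₀ : α) :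
    Fintype.card {s : (Σ a : α, Fin (k a)) // s.1 = a₀} = k a₀ := by
  classical
  rw [Fintype.card_congr (Equiv.subtypeSigmaEquiv (fun a => Fin (k a)) (fun a => a = a₀))]
  rw [Fintype.card_sigma]
  rw [← Finset.sum_subtype ({a₀} : Finset α) (by simp) (fun a => Fintype.card (Fin (k a)))]
  simp

lemma exists_cnt {α : Type*} [Fintype α] {n : ℕ} (k : α → ℕ) (hk : ∑ a, k a = n) :
    ∃ x : Fin n → α, cnt x = k := by
  classical
  have hcard : Fintype.card (Σ a : α, Fin (k a)) = n := by simp [hk]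
  let e := Fintype.equivFinOfCardEq hcard
  refine ⟨fun i => (e.symm i).1, funext fun a => ?_⟩
  have h1 : cnt (fun i => (e.symm i).1) a = Fintype.card {i : Fin n // (e.symm i).1 = a} := by
    rw [Fintype.card_subtype]; rfl
  rw [h1, Fintype.card_congr (Equiv.subtypeEquiv e.symm (fun i => Iff.rfl) :
    {i : Fin n // (e.symm i).1 = a} ≃ {s : Σ a : α, Fin (k a) // s.1 = a})]
  exact card_sigma_fiber k a

lemma card_typeclass {α : Type*} [Fintype α] {n : ℕ} (x₀ : Fin n → α) :
    ((univ : Finset (Fin n → α)).filter fun x => cnt x = cnt x₀).card * ∏ a, (cnt x₀ a)! = n ! := by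
  classical
  have hperm : ((univ : Finset (Equiv.Perm (Fin n)))).card = n ! := by
    simp [Finset.card_univ, Fintype.card_perm]
  have hmaps : ∀ σ : Equiv.Perm (Fin n), σ ∈ (univ : Finset (Equiv.Perm (Fin n))) →
      (x₀ ∘ σ) ∈ (univ : Finset (Fin n → α)).filter fun x => cnt x = cnt x₀ := by
    intro σ _
    simp only [mem_filter, mem_univ, true_and]
    funext a
    exact Finset.card_equiv σ (fun i => by simp [Function.comp])
  have key : ∀ x ∈ (univ : Finset (Fin n → α)).filter (fun x => cnt x = cnt x₀),
      ((univ : Finset (Equiv.Perm (Fin n))).filter fun σ : Equiv.Perm (Fin n) => x₀ ∘ ⇑σ = x).card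
        = ∏ a, (cnt x₀ a)! := by
    intro x hx
    simp only [mem_filter, mem_univ, true_and] at hx
    -- fiber equivalences
    have ecard : ∀ a, Fintype.card {i : Fin n // x i = a} = Fintype.card {i : Fin n // x₀ i = a} := by
      intro a
      rw [Fintype.card_subtype, Fintype.card_subtype]
      exact congrFun hx a
    let e : ∀ a, {i : Fin n // x i = a} ≃ {i : Fin n // x₀ i = a} :=
      fun a => Fintype.equivOfCardEq (ecard a)
    let τ : Fin n ≃ Fin n := Equiv.ofFiberEquiv e
    have hτ : ∀ i, x₀ (τ i) = x i := fun i => Equiv.ofFiberEquiv_map e i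
    -- card of fiber equals card of stabilizer
    have hbij : ((univ : Finset (Equiv.Perm (Fin n))).filter fun σ : Equiv.Perm (Fin n) => x₀ ∘ ⇑σ = x).card
        = ((univ : Finset (Equiv.Perm (Fin n))).filter fun σ : Equiv.Perm (Fin n) => x₀ ∘ ⇑σ = x₀).card := by
      apply Finset.card_equiv (Equiv.mulRight τ⁻¹)
      intro σ
      simp only [mem_filter, mem_univ, true_and, Equiv.coe_mulRight]
      constructor
      · intro hσ
        funext i
        have : (σ * τ⁻¹) i = σ (τ.symm i) := rfl
        rw [Function.comp_apply, this,
          show x₀ (σ (τ.symm i)) = (x₀ ∘ σ) (τ.symm i) from rfl, hσ, ← hτ (τ.symm i),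
          Equiv.apply_symm_apply]
      · intro hσ
        funext i
        have h2 : (x₀ ∘ (σ * τ⁻¹)) (τ i) = x₀ ((σ * τ⁻¹) (τ i)) := rfl
        have h3 : (σ * τ⁻¹) (τ i) = σ i := by
          simp [Equiv.Perm.mul_apply]
        calc (x₀ ∘ σ) i = x₀ (σ i) := rfl
          _ = (x₀ ∘ (σ * τ⁻¹)) (τ i) := by rw [h2, h3]
          _ = x₀ (τ i) := by rw [hσ]
          _ = x i := hτ i
    rw [hbij]
    have hstab : ((univ : Finset (Equiv.Perm (Fin n))).filter fun σ : Equiv.Perm (Fin n) => x₀ ∘ ⇑σ = x₀).card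
        = Fintype.card {g : Equiv.Perm (Fin n) // x₀ ∘ g = x₀} := by
      rw [Fintype.card_subtype]
    rw [hstab, DomMulAct.stabilizer_card]
    exact Finset.prod_congr rfl fun a _ => by rw [Fintype.card_subtype]; rfl
  calc ((univ : Finset (Fin n → α)).filter fun x => cnt x = cnt x₀).card * ∏ a, (cnt x₀ a)!
      = ∑ x ∈ (univ : Finset (Fin n → α)).filter (fun x => cnt x = cnt x₀),
          ((univ : Finset (Equiv.Perm (Fin n))).filter fun σ : Equiv.Perm (Fin n) => x₀ ∘ ⇑σ = x).card := by
        rw [Finset.sum_congr rfl key, Finset.sum_const, smul_eq_mul]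
    _ = ((univ : Finset (Equiv.Perm (Fin n)))).card :=
        (Finset.card_eq_sum_card_fiberwise hmaps).symm
    _ = n ! := hperm

theorem prob_subset_type_class_ge {α : Type*} [Fintype α]
    (P : α → ℝ) (hP : IsPmf P) (n : ℕ) (hn : 1 ≤ n)
    (π : α → ℝ) (hπ : IsType n π) (hsupp : ∀ a, P a = 0 → π a = 0)
    (A : Finset (Fin n → α))
    (hA : A ⊆ Finset.univ.filter (fun x : Fin n → α => empType x = π))
    (c : ℝ) (hc0 : 0 ≤ c) (hc1 : c ≤ 1)
    (hcard : c * ((Finset.univ.filter (fun x : Fin n → α => empType x = π)).card : ℝ)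
      ≤ (A.card : ℝ)) :
    c * (((n : ℝ) + 1) ^ (Fintype.card α))⁻¹ * Real.exp (-(n : ℝ) * klDiv π P) ≤
      ∑ x ∈ A, prodPmf P n x := by
  classical
  obtain ⟨⟨hPpos, hPsum⟩, ⟨⟨hπ0, hπsum⟩, hπint⟩⟩ := And.intro hP hπ
  choose k hk using hπint
  have hnpos : (0:ℝ) < n := by exact_mod_cast hn
  have hn0 : (n:ℝ) ≠ 0 := ne_of_gt hnpos
  -- sum of k is n
  have hksum : ∑ a, k a = n := by
    have h1 : (∑ a, (k a : ℝ)) = n := by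
      have : ∑ a, (k a : ℝ) / n = 1 := by
        rw [← hπsum]; exact Finset.sum_congr rfl fun a _ => (hk a).symm
      rw [← Finset.sum_div] at this
      field_simp at this
      linarith [this]
    exact_mod_cast h1
  -- empType x = π ↔ cnt x = k
  have hTiff : ∀ x : Fin n → α, empType x = π ↔ cnt x = k := by
    intro x
    constructor
    · intro h
      funext a
      have h2 := congrFun h a
      rw [hk a] at h2
      have h3 : ((cnt x a : ℝ)) = k a := by
        have : ((cnt x a : ℝ)) / n = (k a : ℝ) / n := h2
        field_simp at this
        exact_mod_cast this
      exact_mod_cast h3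
    · intro h
      funext a
      show ((Finset.univ.filter fun i => x i = a).card : ℝ) / n = π a
      rw [hk a, show (Finset.univ.filter fun i => x i = a).card = cnt x a from rfl, h]
  set T := Finset.univ.filter (fun x : Fin n → α => empType x = π) with hTdef
  have hTfilter : T = Finset.univ.filter fun x : Fin n → α => cnt x = k := by
    rw [hTdef]
    exact Finset.filter_congr fun x _ => by rw [hTiff x]
  set p := ∏ a, P a ^ k a with hpdef
  set q := ∏ a, π a ^ k a with hqdef
  have hp0 : 0 ≤ p := Finset.prod_nonneg fun a _ => pow_nonneg (hPpos a) _
  have hq0 : 0 ≤ q := Finset.prod_nonneg fun a _ => pow_nonneg (hπ0 a) _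
  -- Step A : sum over A
  have hAsum : ∑ x ∈ A, prodPmf P n x = (A.card : ℝ) * p := by
    rw [Finset.sum_congr rfl (g := fun _ => p) fun x hx => ?_, Finset.sum_const, nsmul_eq_mul]
    have hxT : cnt x = k := by
      have := hA hx
      rw [hTfilter] at this
      exact (Finset.mem_filter.1 this).2
    rw [prodPmf, prod_comp_cnt x P, hxT]
  -- Step B : p = exp(-n D) * q
  have hp_eq : p = Real.exp (-(n:ℝ) * klDiv π P) * q := by
    rw [klDiv, Finset.mul_sum, Real.exp_sum, ← Finset.prod_mul_distrib]
    refine Finset.prod_congr rfl fun a _ => ?_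
    by_cases hπa : 0 < π a
    · have hPa : 0 < P a := by
        rcases (hPpos a).lt_or_eq with h | h
        · exact h
        · exact absurd (hsupp a h.symm) (ne_of_gt hπa)
      have hdivpos : 0 < P a / π a := div_pos hPa hπa
      rw [if_pos hπa]
      have hka : (n:ℝ) * π a = k a := by rw [hk a]; field_simp
      have hlog : -(n:ℝ) * (π a * Real.log (π a / P a)) = (k a : ℝ) * Real.log (P a / π a) := by
        rw [show π a / P a = (P a / π a)⁻¹ by rw [inv_div], Real.log_inv]
        rw [← hka]; ring
      rw [hlog, Real.exp_nat_mul, Real.exp_log hdivpos, ← mul_pow,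
        div_mul_cancel₀ _ (ne_of_gt hπa)]
    · have hπa0 : π a = 0 := le_antisymm (not_lt.1 hπa) (hπ0 a)
      have hka0 : k a = 0 := by
        have : (0:ℝ) = (k a : ℝ) / n := by rw [← hπa0, hk a]
        have h2 : (k a : ℝ) = 0 := by field_simp at this; linarith [this]
        exact_mod_cast h2
      rw [if_neg hπa, hka0, hπa0]
      simp
  -- Step C : (T.card) * q ≥ (n+1)^(-|α|)
  have hstep : ((((n:ℝ) + 1) ^ (Fintype.card α))⁻¹ : ℝ) ≤ (T.card : ℝ) * q := by
    -- 1 = sum over all sequences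
    have h1 : (1:ℝ) = ∑ x : Fin n → α, ∏ i, π (x i) := by
      have hps := Finset.prod_univ_sum (fun _ : Fin n => (Finset.univ : Finset α))
        (fun _ a => π a)
      rw [Fintype.piFinset_univ] at hps
      calc (1:ℝ) = (∑ a, π a) ^ n := by rw [hπsum, one_pow]
        _ = ∏ _i : Fin n, ∑ a, π a := by
            rw [Finset.prod_const, Finset.card_univ, Fintype.card_fin]
        _ = _ := hps
    set I := (Finset.univ : Finset (Fin n → α)).image cnt with hIdef
    have h2 : ∑ x : Fin n → α, ∏ i, π (x i)
        = ∑ κ ∈ I, (((Finset.univ.filter fun x : Fin n → α => cnt x = κ).card : ℝ)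
            * ∏ a, π a ^ κ a) := by
      rw [← Finset.sum_fiberwise_of_maps_to (g := cnt) (t := I)
        (fun x _ => Finset.mem_image_of_mem _ (Finset.mem_univ x)) (fun x => ∏ i, π (x i))]
      refine Finset.sum_congr rfl fun κ hκ => ?_
      rw [Finset.sum_congr rfl (g := fun _ => ∏ a, π a ^ κ a) fun x hx => ?_,
        Finset.sum_const, nsmul_eq_mul]
      rw [prod_comp_cnt x π, (Finset.mem_filter.1 hx).2]
    -- per-κ bound
    obtain ⟨x₀, hx₀⟩ := exists_cnt k hksum
    have hNk : T.card * ∏ a, (k a)! = n ! := by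
      rw [hTfilter, ← hx₀]; exact card_typeclass x₀
    have h4 : ∀ κ ∈ I, (((Finset.univ.filter fun x : Fin n → α => cnt x = κ).card : ℝ)
        * ∏ a, π a ^ κ a) ≤ (T.card : ℝ) * q := by
      intro κ hκ
      obtain ⟨x, -, hx⟩ := Finset.mem_image.1 hκ
      have hκsum : ∑ a, κ a = n := by rw [← hx]; exact cnt_sum x
      have hNκ : (Finset.univ.filter fun y : Fin n → α => cnt y = κ).card * ∏ a, (κ a)!
          = n ! := by rw [← hx]; exact card_typeclass x
      set Nκ := (Finset.univ.filter fun y : Fin n → α => cnt y = κ).card with hNκdef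
      set Nk := T.card with hNkdef
      have hterm : (∏ a, (k a)!) * (∏ a, (k a)^(κ a))
          ≤ (∏ a, (κ a)!) * (∏ a, (k a)^(k a)) := by
        rw [← Finset.prod_mul_distrib, ← Finset.prod_mul_distrib]
        exact Finset.prod_le_prod' fun a _ => fact_mul_pow_le (k a) (κ a)
      have hnat : Nκ * ∏ a, (k a)^(κ a) ≤ Nk * ∏ a, (k a)^(k a) := by
        have hfac : 0 < n ! := Nat.factorial_pos n
        apply Nat.le_of_mul_le_mul_left _ hfac
        calc n ! * (Nκ * ∏ a, (k a)^(κ a))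
            = (Nκ * Nk) * ((∏ a, (k a)!) * (∏ a, (k a)^(κ a))) := by rw [← hNk]; ring
          _ ≤ (Nκ * Nk) * ((∏ a, (κ a)!) * (∏ a, (k a)^(k a))) :=
              Nat.mul_le_mul_left _ hterm
          _ = n ! * (Nk * ∏ a, (k a)^(k a)) := by rw [← hNκ]; ring
      have hqκ : ∏ a, π a ^ κ a = (∏ a, ((k a : ℝ))^(κ a)) / (n:ℝ)^n := by
        calc ∏ a, π a ^ κ a = ∏ a, ((k a : ℝ)/n)^(κ a) :=
              Finset.prod_congr rfl fun a _ => by rw [hk a]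
          _ = (∏ a, (k a:ℝ)^(κ a)) / ∏ a, ((n:ℝ))^(κ a) := by
              rw [← Finset.prod_div_distrib]
              exact Finset.prod_congr rfl fun a _ => div_pow _ _ _
          _ = _ := by rw [Finset.prod_pow_eq_pow_sum, hκsum]
      have hqk : q = (∏ a, ((k a : ℝ))^(k a)) / (n:ℝ)^n := by
        rw [hqdef]
        calc ∏ a, π a ^ k a = ∏ a, ((k a : ℝ)/n)^(k a) :=
              Finset.prod_congr rfl fun a _ => by rw [hk a]
          _ = (∏ a, (k a:ℝ)^(k a)) / ∏ a, ((n:ℝ))^(k a) := by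
              rw [← Finset.prod_div_distrib]
              exact Finset.prod_congr rfl fun a _ => div_pow _ _ _
          _ = _ := by rw [Finset.prod_pow_eq_pow_sum, hksum]
      have hcast : ((Nκ : ℝ)) * (∏ a, ((k a : ℝ))^(κ a))
          ≤ (Nk : ℝ) * ∏ a, ((k a : ℝ))^(k a) := by exact_mod_cast hnat
      have hpowpos : (0:ℝ) < (n:ℝ)^n := by positivity
      rw [hqκ, hqk]
      calc (Nκ:ℝ) * ((∏ a, ((k a : ℝ))^(κ a)) / (n:ℝ)^n)
          = ((Nκ:ℝ) * ∏ a, ((k a : ℝ))^(κ a)) / (n:ℝ)^n := by ring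
        _ ≤ ((Nk:ℝ) * ∏ a, ((k a : ℝ))^(k a)) / (n:ℝ)^n := by gcongr
        _ = (Nk:ℝ) * ((∏ a, ((k a : ℝ))^(k a)) / (n:ℝ)^n) := by ring
    -- combine
    have hTq0 : 0 ≤ (T.card : ℝ) * q := mul_nonneg (Nat.cast_nonneg _) hq0
    have h5 : (1:ℝ) ≤ (I.card : ℝ) * ((T.card : ℝ) * q) := by
      calc (1:ℝ) = ∑ x : Fin n → α, ∏ i, π (x i) := h1
        _ = ∑ κ ∈ I, (((Finset.univ.filter fun x : Fin n → α => cnt x = κ).card : ℝ)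
            * ∏ a, π a ^ κ a) := h2
        _ ≤ ∑ _κ ∈ I, (T.card : ℝ) * q := Finset.sum_le_sum h4
        _ = (I.card : ℝ) * ((T.card : ℝ) * q) := by
            rw [Finset.sum_const, nsmul_eq_mul]
    have hIcard : I.card ≤ (n+1)^(Fintype.card α) := by
      have hb : ∀ κ ∈ I, ∀ a, κ a ≤ n := by
        intro κ hκ a
        obtain ⟨x, -, hx⟩ := Finset.mem_image.1 hκ
        rw [← hx]
        calc cnt x a ≤ (Finset.univ : Finset (Fin n)).card := Finset.card_filter_le _ _
          _ = n := by simp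
      have hinj : I.card ≤ ((Finset.univ : Finset (α → Fin (n+1)))).card := by
        apply Finset.card_le_card_of_injOn
          (fun κ a => (⟨min (κ a) n, by omega⟩ : Fin (n+1))) (fun κ _ => Finset.mem_univ _)
        intro κ1 h1m κ2 h2m heq
        funext a
        have h3 : min (κ1 a) n = min (κ2 a) n := congrArg Fin.val (congrFun heq a)
        rw [min_eq_left (hb κ1 (Finset.mem_coe.1 h1m) a),
          min_eq_left (hb κ2 (Finset.mem_coe.1 h2m) a)] at h3
        exact h3
      calc I.card ≤ _ := hinj
        _ = (n+1)^(Fintype.card α) := by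
            rw [Finset.card_univ, Fintype.card_fun, Fintype.card_fin]
    have hpow : (0:ℝ) < ((n:ℝ)+1)^(Fintype.card α) := by positivity
    have h6 : (1:ℝ) ≤ ((n:ℝ)+1)^(Fintype.card α) * ((T.card : ℝ) * q) := by
      refine h5.trans (mul_le_mul_of_nonneg_right ?_ hTq0)
      calc (I.card : ℝ) ≤ (((n+1)^(Fintype.card α) : ℕ) : ℝ) := by exact_mod_cast hIcard
        _ = ((n:ℝ)+1)^(Fintype.card α) := by push_cast; ring
    have h7 := mul_le_mul_of_nonneg_left h6 (inv_nonneg.2 hpow.le)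
    rw [mul_one, ← mul_assoc, inv_mul_cancel₀ (ne_of_gt hpow), one_mul] at h7
    exact h7
  -- final assembly
  have hexp : 0 < Real.exp (-(n:ℝ) * klDiv π P) := Real.exp_pos _
  calc c * (((n : ℝ) + 1) ^ (Fintype.card α))⁻¹ * Real.exp (-(n : ℝ) * klDiv π P)
      ≤ c * ((T.card : ℝ) * q) * Real.exp (-(n : ℝ) * klDiv π P) := by
        exact mul_le_mul_of_nonneg_right (mul_le_mul_of_nonneg_left hstep hc0) hexp.le
    _ = (c * (T.card : ℝ)) * (Real.exp (-(n : ℝ) * klDiv π P) * q) := by ring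
    _ = (c * (T.card : ℝ)) * p := by rw [← hp_eq]
    _ ≤ (A.card : ℝ) * p := mul_le_mul_of_nonneg_right hcard hp0
    _ = ∑ x ∈ A, prodPmf P n x := hAsum.symm
end
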